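/- Let ℓ ≥ 3 be an integer and τ ∈ ℂ with τ ≠ 0. Define P_m(w,τ) = ∑_{0 ≤ k ≤ ⌊m/2⌋} (m!/(4^k k! (m−2k)!)) τ^k w^{m−2k}. Then limsup_{n→∞} ( sup_{|w| ≤ 1} |P_{nℓ}(w,τ)| / n! )^{1/n} = ∞; consequently, for every t ≠ 0 the series ∑_{n≥0} (t^n/n!) P_{nℓ}(·,τ) fails to converge uniformly on the closed unit disk, i.e. the *-exponential e_*^{t w_*^ℓ} cannot be defined as a convergent power series in t. -/

import Mathlib

open Complex Filter
open scoped ENNReal NNReal Topology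

private lemma fact_pow_le (m k : ℕ) : m ^ k * m.factorial ≤ (m + k).factorial := by
  induction k with
  | zero => simp
  | succ k ih =>
    have h1 : m ^ (k+1) * m.factorial = m * (m ^ k * m.factorial) := by ring
    rw [h1]
    calc m * (m ^ k * m.factorial) ≤ m * (m + k).factorial :=
          Nat.mul_le_mul_left m ih
      _ ≤ (m + k + 1) * (m + k).factorial := Nat.mul_le_mul_right _ (by omega)
      _ = (m + (k+1)).factorial := by rw [← Nat.factorial_succ]; ring_nf

private lemma core_growth (r : ℝ) (hr : 0 < r) (ℓ : ℕ) (hℓ : 3 ≤ ℓ) (C : ℝ) (hC : 1 ≤ C) :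
    ∀ᶠ j : ℕ in atTop,
      C ^ (2*j) * ((2*j).factorial : ℝ) * (4 ^ (j*ℓ) * ((j*ℓ).factorial : ℝ))
        ≤ ((2*(j*ℓ)).factorial : ℝ) * r ^ (j*ℓ) := by
  have hcast : Tendsto (fun j : ℕ => (j:ℝ)) atTop atTop := tendsto_natCast_atTop_atTop
  have ha : (0:ℝ) < (ℓ:ℝ) * r / 4 := by positivity
  have h1 : ∀ᶠ j : ℕ in atTop, (1:ℝ) ≤ (j:ℝ) * ((ℓ:ℝ) * r / 4) :=
    (hcast.atTop_mul_const ha).eventually_ge_atTop 1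
  have h2 : ∀ᶠ j : ℕ in atTop, 4 * C^2 ≤ (j:ℝ) * ((ℓ:ℝ) * r / 4)^3 :=
    (hcast.atTop_mul_const (by positivity)).eventually_ge_atTop (4 * C^2)
  filter_upwards [h1, h2, eventually_ge_atTop 1] with j hx hj3 hj1
  set m : ℕ := j * ℓ with hm
  have hmc : (m:ℝ) = (j:ℝ) * (ℓ:ℝ) := by push_cast [hm]; ring
  set x : ℝ := (m:ℝ) * r / 4 with hxdef
  have he : (j:ℝ) * ((ℓ:ℝ) * r / 4) = x := by rw [hxdef, hmc]; ring
  have hx1 : (1:ℝ) ≤ x := he ▸ hx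
  have hA : ((m:ℝ))^m * (m.factorial : ℝ) ≤ ((2*m).factorial : ℝ) := by
    have := fact_pow_le m m
    rw [show m + m = 2*m by ring] at this
    exact_mod_cast this
  have hB : ((2*j).factorial : ℝ) ≤ ((2*j):ℝ)^(2*j) := by
    exact_mod_cast Nat.factorial_le_pow (2*j)
  have hkey : ((2*(j:ℝ))*C)^(2*j) ≤ x^m := by
    have h3j : 3*j ≤ m := by
      rw [hm]
      calc 3*j = j*3 := by ring
        _ ≤ j*ℓ := Nat.mul_le_mul_left j hℓ
    have hstep : x^(3*j) ≤ x^m := pow_le_pow_right₀ hx1 h3j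
    refine le_trans ?_ hstep
    rw [show 2*j = j*2 by ring, show 3*j = j*3 by ring, pow_mul', pow_mul']
    apply pow_le_pow_left₀ (by positivity)
    have hj1' : (1:ℝ) ≤ (j:ℝ) := by exact_mod_cast hj1
    have hxj : x = (j:ℝ) * ((ℓ:ℝ)*r/4) := he.symm
    rw [hxj]
    nlinarith [sq_nonneg ((j:ℝ)), mul_pos (lt_of_lt_of_le one_pos hj1') ha, hj3, hj1', hC,
      mul_le_mul_of_nonneg_left hj3 (mul_nonneg (by linarith : (0:ℝ) ≤ (j:ℝ)) (by linarith : (0:ℝ) ≤ (j:ℝ)))]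
  have hmfac : (0:ℝ) < (m.factorial : ℝ) := by exact_mod_cast m.factorial_pos
  calc C ^ (2*j) * ((2*j).factorial : ℝ) * (4 ^ m * (m.factorial : ℝ))
      ≤ C ^ (2*j) * ((2*j):ℝ)^(2*j) * (4 ^ m * (m.factorial : ℝ)) := by
        exact mul_le_mul_of_nonneg_right
          (mul_le_mul_of_nonneg_left hB (by positivity)) (by positivity)
    _ = ((2*(j:ℝ))*C)^(2*j) * 4^m * (m.factorial : ℝ) := by
        rw [mul_pow]; ring
    _ ≤ x^m * 4^m * (m.factorial : ℝ) := by
        exact mul_le_mul_of_nonneg_right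
          (mul_le_mul_of_nonneg_right hkey (by positivity)) hmfac.le
    _ = (m:ℝ)^m * r^m * (m.factorial:ℝ) := by
        rw [hxdef, div_pow, mul_pow]
        field_simp
    _ = ((m:ℝ)^m * (m.factorial:ℝ)) * r^m := by ring
    _ ≤ ((2*m).factorial : ℝ) * r^m :=
        mul_le_mul_of_nonneg_right hA (by positivity)

/-- `P_m(w,τ) = ∑_{0 ≤ k ≤ ⌊m/2⌋} (m!/(4^k k! (m−2k)!)) τ^k w^{m−2k}`, the
`τ`-expression `:w_*^m:_τ` of the `m`-th `*`-power of the generator. -/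
noncomputable def Ppoly (τ : ℂ) (m : ℕ) : ℂ → ℂ := fun w =>
  ∑ k ∈ Finset.range (m / 2 + 1),
    ((m.factorial : ℂ) / (4 ^ k * (k.factorial : ℂ) * ((m - 2 * k).factorial : ℂ))) *
      τ ^ k * w ^ (m - 2 * k)

private lemma Ppoly_cont (τ : ℂ) (m : ℕ) : Continuous (Ppoly τ m) := by
  unfold Ppoly
  exact continuous_finset_sum _ (fun k _ => (continuous_const.mul (continuous_pow (M := ℂ) _)))

private lemma Ppoly_zero (τ : ℂ) (m : ℕ) :
    Ppoly τ (2*m) 0 = ((2*m).factorial : ℂ) / (4^m * (m.factorial : ℂ)) * τ^m := by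
  unfold Ppoly
  rw [show (2*m)/2 = m by omega]
  rw [Finset.sum_eq_single m]
  · have h0 : 2*m - 2*m = 0 := by omega
    simp [h0]
  · intro k hk hne
    have hk' : k ≤ m := by simpa [Nat.lt_succ_iff] using hk
    have : 0 < 2*m - 2*k := by omega
    simp [zero_pow this.ne']
  · intro h; exact absurd (Finset.self_mem_range_succ m) h

private lemma abs_Ppoly_zero (τ : ℂ) (m : ℕ) :
    ‖Ppoly τ (2*m) 0‖
      = ((2*m).factorial : ℝ) / (4^m * (m.factorial : ℝ)) * ‖τ‖ ^ m := by
  rw [Ppoly_zero]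
  simp [norm_mul, norm_div, norm_pow, Complex.norm_natCast]

private lemma abs_le_sup (f : ℂ → ℂ) (hf : Continuous f) :
    ‖f 0‖ ≤ ⨆ w ∈ Metric.closedBall (0 : ℂ) 1, ‖f w‖ := by
  obtain ⟨M, hM⟩ := (isCompact_closedBall (0:ℂ) 1).exists_bound_of_continuousOn
    ((continuous_norm.comp hf).continuousOn)
  have hbdd : BddAbove (Set.range fun w : ℂ =>
      ⨆ _ : w ∈ Metric.closedBall (0 : ℂ) 1, ‖f w‖) := by
    refine ⟨max M 0, ?_⟩
    rintro x ⟨w, rfl⟩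
    refine Real.iSup_le (fun hw => ?_) (le_max_right _ _)
    exact le_trans (by simpa using hM w hw) (le_max_left _ _)
  have h0 : (0:ℂ) ∈ Metric.closedBall (0 : ℂ) 1 := by simp
  refine le_trans ?_ (le_ciSup hbdd 0)
  exact le_ciSup (f := fun _ : (0:ℂ) ∈ Metric.closedBall (0 : ℂ) 1 => ‖f 0‖)
    ⟨‖f 0‖, by rintro x ⟨h, rfl⟩; exact le_rfl⟩ h0

private lemma Pzero_big (ℓ : ℕ) (hℓ : 3 ≤ ℓ) (τ : ℂ) (hτ : τ ≠ 0) (C : ℝ) (hC : 1 ≤ C) :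
    ∀ᶠ j : ℕ in atTop,
      C ^ (2*j) * ((2*j).factorial : ℝ) ≤ ‖Ppoly τ ((2*j)*ℓ) 0‖ := by
  have hr : 0 < ‖τ‖ := by simpa using hτ
  filter_upwards [core_growth (‖τ‖) hr ℓ hℓ C hC] with j h
  rw [show (2*j)*ℓ = 2*(j*ℓ) by ring, abs_Ppoly_zero]
  set m : ℕ := j * ℓ
  have hD : (0:ℝ) < 4^m * (m.factorial : ℝ) := by positivity
  rw [div_mul_eq_mul_div, le_div_iff₀ hD]
  linarith [h]

/-- For `ℓ ≥ 3` and `τ ≠ 0`,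
`limsup_n (sup_{|w|≤1} |P_{nℓ}(w,τ)| / n!)^{1/n} = ∞`; consequently for every `t ≠ 0`
the series `∑ (t^n/n!) P_{nℓ}(·,τ)` fails to converge uniformly on the closed unit
disk, i.e. `e_*^{t w_*^ℓ}` cannot be defined as a convergent power series in `t`. -/
theorem starExp_power_ge_three_diverges (ℓ : ℕ) (hℓ : 3 ≤ ℓ) (τ : ℂ) (hτ : τ ≠ 0) :
    Filter.limsup (fun n : ℕ =>
        (ENNReal.ofReal
          ((⨆ w ∈ Metric.closedBall (0 : ℂ) 1, ‖Ppoly τ (n * ℓ) w‖) /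
            (n.factorial : ℝ))) ^ (1 / (n : ℝ))) Filter.atTop = ⊤ ∧
    ∀ t : ℂ, t ≠ 0 →
      ¬ ∃ g : ℂ → ℂ, TendstoUniformlyOn
        (fun N : ℕ => fun w : ℂ =>
          ∑ n ∈ Finset.range N, t ^ n / (n.factorial : ℂ) * Ppoly τ (n * ℓ) w)
        g Filter.atTop (Metric.closedBall (0 : ℂ) 1) := by
  constructor
  · -- limsup = ⊤
    apply ENNReal.eq_top_of_forall_nnreal_le
    intro c
    set C : ℝ := max (c:ℝ) 1 with hCdef
    have hC : 1 ≤ C := le_max_right _ _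
    obtain ⟨N, hN⟩ := eventually_atTop.1 (Pzero_big ℓ hℓ τ hτ C hC)
    apply le_limsup_of_frequently_le'
    rw [frequently_atTop]
    intro M
    set j : ℕ := max M N + 1 with hjdef
    set n : ℕ := 2*j with hndef
    refine ⟨n, by omega, ?_⟩
    have hkey := hN j (by omega)
    have hfac : (0:ℝ) < (n.factorial : ℝ) := by exact_mod_cast n.factorial_pos
    have hsup : ‖Ppoly τ (n*ℓ) 0‖
        ≤ ⨆ w ∈ Metric.closedBall (0 : ℂ) 1, ‖Ppoly τ (n*ℓ) w‖ :=
      abs_le_sup _ (Ppoly_cont τ (n*ℓ))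
    have hCn : C ^ n ≤
        (⨆ w ∈ Metric.closedBall (0 : ℂ) 1, ‖Ppoly τ (n*ℓ) w‖) /
          (n.factorial : ℝ) := by
      rw [le_div_iff₀ hfac]
      exact le_trans (by rw [hndef]) (le_trans hkey hsup)
    have hC0 : (0:ℝ) ≤ C := by linarith
    have hn0 : (n:ℝ) ≠ 0 := by
      have : 0 < n := by omega
      exact_mod_cast this.ne'
    calc (c : ℝ≥0∞) = ENNReal.ofReal (c:ℝ) := ENNReal.ofReal_coe_nnreal.symm
      _ ≤ ENNReal.ofReal C := ENNReal.ofReal_le_ofReal (le_max_left _ _)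
      _ = ((ENNReal.ofReal C) ^ (n:ℝ)) ^ (1/(n:ℝ)) := by
          rw [← ENNReal.rpow_mul, mul_one_div_cancel hn0, ENNReal.rpow_one]
      _ = ((ENNReal.ofReal C) ^ n) ^ (1/(n:ℝ)) := by rw [ENNReal.rpow_natCast]
      _ = (ENNReal.ofReal (C ^ n)) ^ (1/(n:ℝ)) := by rw [ENNReal.ofReal_pow hC0]
      _ ≤ (ENNReal.ofReal
            ((⨆ w ∈ Metric.closedBall (0 : ℂ) 1, ‖Ppoly τ (n*ℓ) w‖) /
              (n.factorial : ℝ))) ^ (1/(n:ℝ)) :=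
          ENNReal.rpow_le_rpow (ENNReal.ofReal_le_ofReal hCn) (by positivity)
  · -- divergence
    rintro t ht ⟨g, hg⟩
    have h0mem : (0:ℂ) ∈ Metric.closedBall (0 : ℂ) 1 := by simp
    have hpt := hg.tendsto_at h0mem
    have hterm : Tendsto (fun n : ℕ => t ^ n / (n.factorial : ℂ) * Ppoly τ (n*ℓ) 0)
        atTop (𝓝 0) := by
      have h2 := (hpt.comp (tendsto_add_atTop_nat 1)).sub hpt
      simp only [Function.comp_def, Finset.sum_range_succ, sub_self] at h2
      simpa using h2
    have hnorm : Tendsto (fun n : ℕ =>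
        ‖t ^ n / (n.factorial : ℂ) * Ppoly τ (n*ℓ) 0‖) atTop (𝓝 0) := by
      simpa using hterm.norm
    have hev : ∀ᶠ n : ℕ in atTop,
        ‖t ^ n / (n.factorial : ℂ) * Ppoly τ (n*ℓ) 0‖ < 1 :=
      hnorm.eventually (gt_mem_nhds one_pos)
    have htpos : 0 < ‖t‖ := by simpa using ht
    set C : ℝ := max (2 / ‖t‖) 1 with hCdef
    have hC : 1 ≤ C := le_max_right _ _
    have htC : 2 ≤ ‖t‖ * C := by
      have h1 : 2 / ‖t‖ ≤ C := le_max_left _ _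
      calc (2:ℝ) = ‖t‖ * (2 / ‖t‖) := by field_simp
        _ ≤ ‖t‖ * C := mul_le_mul_of_nonneg_left h1 htpos.le
    obtain ⟨N, hN⟩ := eventually_atTop.1 (Pzero_big ℓ hℓ τ hτ C hC)
    have hfreq : ∃ᶠ n : ℕ in atTop,
        1 ≤ ‖t ^ n / (n.factorial : ℂ) * Ppoly τ (n*ℓ) 0‖ := by
      rw [frequently_atTop]
      intro M
      set j : ℕ := max M N + 1 with hjdef
      set n : ℕ := 2*j with hndef
      refine ⟨n, by omega, ?_⟩
      have hkey : C ^ n * (n.factorial : ℝ) ≤ ‖Ppoly τ (n*ℓ) 0‖ := by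
        rw [hndef]; exact hN j (by omega)
      have hfac : (0:ℝ) < (n.factorial : ℝ) := by exact_mod_cast n.factorial_pos
      rw [norm_mul, norm_div, norm_pow, Complex.norm_natCast, div_mul_eq_mul_div,
        le_div_iff₀ hfac, one_mul]
      calc (n.factorial : ℝ) = 1 * (n.factorial : ℝ) := (one_mul _).symm
        _ ≤ (‖t‖ * C) ^ n * (n.factorial : ℝ) :=
            mul_le_mul_of_nonneg_right (one_le_pow₀ (by linarith)) hfac.le
        _ = ‖t‖ ^ n * (C ^ n * (n.factorial : ℝ)) := by rw [mul_pow]; ring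
        _ ≤ ‖t‖ ^ n * ‖Ppoly τ (n*ℓ) 0‖ :=
            mul_le_mul_of_nonneg_left hkey (by positivity)
    obtain ⟨n, h1, h2⟩ := (hev.and_frequently hfreq).exists
    linarith
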